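/- Let v₁,…,v_{d+1} ∈ ℤ^d be points whose lifts ṽ₁,…,ṽ_{d+1} are linearly independent, let Λ = span_ℤ(ṽ₁,…,ṽ_{d+1}), and suppose (0,1) = (a₁/q₁)ṽ₁ + ⋯ + (a_{d+1}/q_{d+1})ṽ_{d+1} where aᵢ ∈ ℕ, qᵢ ∈ ℕ are positive with gcd(aᵢ, qᵢ) = 1 and Σᵢ aᵢ/qᵢ = 1. Then the order of the element (0,1) + Λ in the quotient group ℤ^{d+1}/Λ equals lcm(q₁,…,q_{d+1}); consequently [ℤ^{d+1} : span_ℤ((0,1), ṽ₁,…,ṽ_{d+1})] = [ℤ^{d+1} : Λ] / lcm(q₁,…,q_{d+1}). -/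

import Mathlib

/-- The lift of `v ∈ ℤ^d` to `ṽ = (v, 1) ∈ ℤ^{d+1}`. -/
def liftZ {d : ℕ} (u : Fin d → ℤ) : Fin (d + 1) → ℤ := Fin.snoc u 1

theorem order_of_lifted_zero_eq_lcm
    (d : ℕ) (v : Fin (d + 1) → Fin d → ℤ)
    (hli : LinearIndependent ℤ fun j => liftZ (v j))
    (a q : Fin (d + 1) → ℕ)
    (ha : ∀ i, 0 < a i) (hq : ∀ i, 0 < q i)
    (hcop : ∀ i, Nat.gcd (a i) (q i) = 1)
    (hsum : ∑ i, (a i : ℚ) / (q i : ℚ) = 1)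
    (hrep : (fun i => ((liftZ (0 : Fin d → ℤ)) i : ℚ))
      = ∑ j, ((a j : ℚ) / (q j : ℚ)) • fun i => ((liftZ (v j)) i : ℚ)) :
    addOrderOf ((liftZ (0 : Fin d → ℤ) :
        (Fin (d + 1) → ℤ) ⧸ AddSubgroup.closure (Set.range fun j => liftZ (v j))))
      = Finset.univ.lcm q ∧
    (AddSubgroup.closure
        (insert (liftZ (0 : Fin d → ℤ)) (Set.range fun j => liftZ (v j)))).index
      = (AddSubgroup.closure (Set.range fun j => liftZ (v j))).index
          / Finset.univ.lcm q := by
  classical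
  set w : Fin (d + 1) → ℤ := liftZ (0 : Fin d → ℤ) with hw
  set f : Fin (d + 1) → Fin (d + 1) → ℤ := fun j => liftZ (v j) with hf
  set Λ : AddSubgroup (Fin (d + 1) → ℤ) := AddSubgroup.closure (Set.range f) with hΛ
  set L : ℕ := Finset.univ.lcm q with hL
  have hqQ : ∀ j, ((q j : ℚ)) ≠ 0 := fun j => Nat.cast_ne_zero.mpr (hq j).ne'
  -- componentwise version of hrep
  have hrep' : ∀ i, (w i : ℚ) = ∑ j, ((a j : ℚ) / (q j : ℚ)) * (f j i : ℚ) := by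
    intro i
    have := congrFun hrep i
    simpa using this
  -- membership in Λ
  have hmemΛ : ∀ x : Fin (d + 1) → ℤ, x ∈ Λ ↔ ∃ c : Fin (d + 1) → ℤ,
      ∑ j, c j • f j = x := by
    intro x
    rw [hΛ, ← Submodule.span_int_eq_addSubgroupClosure, Submodule.mem_toAddSubgroup,
      Submodule.mem_span_range_iff_exists_fun]
  -- key arithmetic characterization
  have key : ∀ n : ℕ, ((n : ℤ) • w ∈ Λ) ↔ ∀ j, q j ∣ n * a j := by
    intro n
    rw [hmemΛ]
    constructor
    · rintro ⟨c, hc⟩ j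
      -- pass to ℚ and clear denominators
      set Q : ℕ := ∏ i, q i with hQ
      have hQj : ∀ j, q j * ∏ i ∈ Finset.univ.erase j, q i = Q := by
        intro j
        rw [hQ, ← Finset.mul_prod_erase Finset.univ q (Finset.mem_univ j)]
      set Qj : Fin (d + 1) → ℕ := fun j => ∏ i ∈ Finset.univ.erase j, q i with hQjdef
      set m : Fin (d + 1) → ℤ := fun j => (Q : ℤ) * c j - (n * a j : ℕ) * (Qj j) with hm
      have hzero : ∑ j, m j • f j = 0 := by
        funext i
        have hci : ∑ j, (c j : ℚ) * (f j i : ℚ) = (n : ℚ) * (w i : ℚ) := by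
          have := congrFun hc i
          have : ((∑ j, c j • f j) i : ℚ) = (((n : ℤ) • w) i : ℚ) := by rw [this]
          simpa [Finset.sum_apply] using this
        have : ((∑ j, m j • f j) i : ℚ) = ((0 : Fin (d+1) → ℤ) i : ℚ) := by
          simp only [Finset.sum_apply, Pi.smul_apply, smul_eq_mul, Pi.zero_apply,
            Int.cast_sum, Int.cast_mul, Int.cast_zero]
          have expand : ∑ j, ((m j : ℚ)) * (f j i : ℚ)
              = (Q : ℚ) * ∑ j, (c j : ℚ) * (f j i : ℚ)
                - ∑ j, (n : ℚ) * (a j : ℚ) * (Qj j : ℚ) * (f j i : ℚ) := by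
            rw [Finset.mul_sum, ← Finset.sum_sub_distrib]
            refine Finset.sum_congr rfl fun j _ => ?_
            push_cast [hm]
            ring
          rw [expand, hci, hrep' i, Finset.mul_sum, Finset.mul_sum, ← Finset.sum_sub_distrib]
          refine Finset.sum_eq_zero fun j _ => ?_
          have hqQj : (q j : ℚ) * (Qj j : ℚ) = (Q : ℚ) := by
            rw [← Nat.cast_mul, hQj j]
          have haux : (Q : ℚ) * ((a j : ℚ) / (q j : ℚ)) = (a j : ℚ) * (Qj j : ℚ) := by
            rw [← hqQj]
            field_simp
            linear_combination ((Qj j : ℚ) * (a j : ℚ)) * mul_inv_cancel₀ (hqQ j)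
          linear_combination ((n : ℚ) * (f j i : ℚ)) * haux
        exact_mod_cast this
      have hm0 : ∀ j, m j = 0 := by
        have := Fintype.linearIndependent_iff.mp hli m
        exact this hzero
      have := hm0 j
      rw [hm] at this
      have heq : (Q : ℤ) * c j = (n * a j : ℕ) * (Qj j) := by linarith [sub_eq_zero.mp this]
      -- multiply by q j and cancel Q
      have hQpos : 0 < Q := Finset.prod_pos fun i _ => hq i
      have heq2 : (Q : ℤ) * (c j * q j) = (Q : ℤ) * ((n * a j : ℕ)) := by
        have : (Q : ℤ) * c j * q j = (n * a j : ℕ) * ((Qj j) * q j) := by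
          rw [heq]; ring
        rw [mul_comm (Qj j : ℤ) (q j : ℤ), ← Nat.cast_mul, hQj j] at this
        push_cast at this ⊢
        linarith
      have heq3 : c j * q j = ((n * a j : ℕ) : ℤ) :=
        mul_left_cancel₀ (by exact_mod_cast hQpos.ne') heq2
      have : (q j : ℤ) ∣ ((n * a j : ℕ) : ℤ) := ⟨c j, by linarith [heq3]⟩
      exact_mod_cast this
    · intro h
      refine ⟨fun j => ((n * a j) / q j : ℕ), ?_⟩
      funext i
      have : ∀ j, (((n * a j / q j : ℕ) : ℤ) : ℚ) = (n : ℚ) * (a j : ℚ) / (q j : ℚ) := by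
        intro j
        rw [Int.cast_natCast, Nat.cast_div (h j) (hqQ j)]
        push_cast; ring
      have goalQ : ((∑ j, ((n * a j / q j : ℕ) : ℤ) • f j) i : ℚ) = (((n : ℤ) • w) i : ℚ) := by
        simp only [Finset.sum_apply, Pi.smul_apply, smul_eq_mul, Int.cast_sum, Int.cast_mul]
        rw [show ((((n : ℤ)) : ℚ) * ((w i : ℤ) : ℚ)) = (n : ℚ) * (w i : ℚ) by push_cast; ring,
          hrep' i, Finset.mul_sum]
        refine Finset.sum_congr rfl fun j _ => ?_
        rw [this j]
        ring
      exact_mod_cast goalQ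
  -- characterization in terms of the quotient
  have key2 : ∀ n : ℕ, n • ((w : (Fin (d + 1) → ℤ) ⧸ Λ)) = 0 ↔ L ∣ n := by
    intro n
    have h1 : n • ((w : (Fin (d + 1) → ℤ) ⧸ Λ)) = (((n : ℤ) • w : Fin (d+1) → ℤ) :
        (Fin (d + 1) → ℤ) ⧸ Λ) := by
      rw [natCast_zsmul]
      exact (QuotientAddGroup.mk_nsmul Λ w n).symm
    rw [h1, QuotientAddGroup.eq_zero_iff, key n]
    constructor
    · intro h
      refine Finset.lcm_dvd fun j _ => ?_
      have hco : Nat.Coprime (q j) (a j) := (Nat.coprime_comm.mp (hcop j))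
      exact hco.dvd_of_dvd_mul_right (h j)
    · intro h j
      exact Dvd.dvd.mul_right ((Finset.dvd_lcm (Finset.mem_univ j)).trans h) (a j)
  have hLpos : 0 < L := by
    rcases Nat.eq_zero_or_pos L with h | h
    · exfalso
      have := Finset.lcm_eq_zero_iff.mp h
      rcases this with ⟨i, _, hi⟩
      exact (hq i).ne' hi
    · exact h
  have horder : addOrderOf ((w : (Fin (d + 1) → ℤ) ⧸ Λ)) = L := by
    refine Nat.dvd_antisymm ?_ ?_
    · exact addOrderOf_dvd_of_nsmul_eq_zero ((key2 L).mpr dvd_rfl)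
    · exact (key2 _).mp (addOrderOf_nsmul_eq_zero _)
  refine ⟨horder, ?_⟩
  -- index computation
  set K : AddSubgroup (Fin (d + 1) → ℤ) :=
    AddSubgroup.closure (insert w (Set.range f)) with hK
  have hΛK : Λ ≤ K := AddSubgroup.closure_mono (Set.subset_insert _ _)
  set π : (Fin (d + 1) → ℤ) →+ (Fin (d + 1) → ℤ) ⧸ Λ := QuotientAddGroup.mk' Λ with hπ
  have hmap : K.map π = AddSubgroup.zmultiples ((w : (Fin (d + 1) → ℤ) ⧸ Λ)) := by
    rw [hK, AddMonoidHom.map_closure]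
    refine le_antisymm ?_ ?_
    · rw [AddSubgroup.closure_le]
      rintro x ⟨y, hy, rfl⟩
      rcases hy with rfl | ⟨j, rfl⟩
      · exact AddSubgroup.mem_zmultiples _
      · have : f j ∈ Λ := AddSubgroup.subset_closure (Set.mem_range_self j)
        have : π (f j) = 0 := (QuotientAddGroup.eq_zero_iff _).mpr this
        rw [this]
        exact zero_mem _
    · rw [AddSubgroup.zmultiples_eq_closure]
      exact AddSubgroup.closure_mono
        (Set.singleton_subset_iff.mpr ⟨w, Set.mem_insert _ _, rfl⟩)
  have hmapindex : (K.map π).index = K.index :=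
    AddSubgroup.index_map_eq _ (QuotientAddGroup.mk'_surjective Λ)
      (by rw [QuotientAddGroup.ker_mk']; exact hΛK)
  have hcard : Nat.card (AddSubgroup.zmultiples ((w : (Fin (d + 1) → ℤ) ⧸ Λ))) = L := by
    rw [Nat.card_zmultiples, horder]
  have hlagrange : L * K.index = Λ.index := by
    rw [← hmapindex, hmap, ← hcard, AddSubgroup.card_mul_index, AddSubgroup.index_eq_card,
      Nat.card_congr (Equiv.refl _)]
  rw [← hlagrange, Nat.mul_div_cancel_left _ hLpos]
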